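/- Every primitive countably compact Hausdorff topological inverse semigroup S is topologically isomorphic to an orthogonal sum Σ_{i∈A} B_{λ_i}(G_i) of topological Brandt λ_i-extensions of countably compact topological groups G_i, where each cardinal λ_i is finite. -/

import Mathlib

universe u

/-- A space is countably compact if every countable open cover has a finite
subcover. -/
def CountablyCompact (X : Type*) [TopologicalSpace X] : Prop :=
  ∀ U : ℕ → Set X, (∀ n, IsOpen (U n)) → (⋃ n, U n) = Set.univ →
    ∃ t : Finset ℕ, (⋃ n ∈ t, U n) = Set.univ

/-- `inv` is an inversion making the semigroup an inverse semigroup: each `x` has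
`inv x` as an inverse, and inverses are unique. -/
def InvSgrp {S : Type*} [Semigroup S] (inv : S → S) : Prop :=
  (∀ x : S, x * inv x * x = x) ∧ (∀ x : S, inv x * x * inv x = inv x) ∧
    ∀ x y : S, x * y * x = x → y * x * y = y → y = inv x

namespace Stmt8

lemma massoc {S : Type u} [Semigroup S] {p q r : S} (h : p * q = r) (y : S) :
    p * (q * y) = r * y := by rw [← mul_assoc, h]

section Semigroup
variable {S : Type u} [Semigroup S] {inv : S → S}

lemma xix (hinv : InvSgrp inv) (x : S) : x * (inv x * x) = x := by
  rw [← mul_assoc]; exact hinv.1 x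

lemma ixi (hinv : InvSgrp inv) (x : S) : inv x * (x * inv x) = inv x := by
  rw [← mul_assoc]; exact hinv.2.1 x

lemma inv_uniq (hinv : InvSgrp inv) {x y : S} (h1 : x * y * x = x) (h2 : y * x * y = y) :
    y = inv x := hinv.2.2 x y h1 h2

lemma inv_idem (hinv : InvSgrp inv) {e : S} (he : e * e = e) : inv e = e :=
  (inv_uniq hinv (by rw [he, he]) (by rw [he, he])).symm

lemma inv_inv (hinv : InvSgrp inv) (x : S) : inv (inv x) = x :=
  (inv_uniq hinv (hinv.2.1 x) (hinv.1 x)).symm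

lemma idem_ix (hinv : InvSgrp inv) (x : S) : (inv x * x) * (inv x * x) = inv x * x := by
  simp only [mul_assoc]
  exact congrArg _ (xix hinv x)

lemma idem_xi (hinv : InvSgrp inv) (x : S) : (x * inv x) * (x * inv x) = x * inv x := by
  simp only [mul_assoc]
  exact congrArg _ (ixi hinv x)

lemma idem_mul (hinv : InvSgrp inv) {e f : S} (he : e * e = e) (hf : f * f = f) :
    (e * f) * (e * f) = e * f := by
  set a := inv (e * f) with ha
  have k1 : (e * f) * a * (e * f) = e * f := hinv.1 _
  have k2 : a * (e * f) * a = a := hinv.2.1 _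
  simp only [mul_assoc] at k1 k2
  have k2' : ∀ y, a * (e * (f * (a * y))) = a * y := fun y => by
    calc a * (e * (f * (a * y))) = a * (e * (f * a)) * y := by simp only [mul_assoc]
      _ = a * y := by rw [k2]
  have g1 : (e * f) * (f * (a * e)) * (e * f) = e * f := by
    simp only [mul_assoc, massoc he, massoc hf]; exact k1
  have g2 : (f * (a * e)) * (e * f) * (f * (a * e)) = f * (a * e) := by
    simp only [mul_assoc, massoc he, massoc hf]
    rw [k2']
  have ha2 : f * (a * e) = a := inv_uniq hinv g1 g2
  have aidem : a * a = a := by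
    have t : (f * (a * e)) * (f * (a * e)) = f * (a * e) := by
      simp only [mul_assoc]; rw [k2']
    rwa [ha2] at t
  have hef : e * f = inv a := by
    apply inv_uniq hinv
    · simp only [← mul_assoc] at k2 ⊢; exact k2
    · simp only [← mul_assoc] at k1 ⊢; exact k1
  rw [hef, inv_idem hinv aidem, aidem]

lemma idem_comm (hinv : InvSgrp inv) {e f : S} (he : e * e = e) (hf : f * f = f) :
    e * f = f * e := by
  have hef := idem_mul hinv he hf
  have hfe := idem_mul hinv hf he
  have h1 : (e * f) * (f * e) * (e * f) = e * f := by
    simp only [mul_assoc, massoc hf, massoc he]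
    simp only [mul_assoc] at hef; exact hef
  have h2 : (f * e) * (e * f) * (f * e) = f * e := by
    simp only [mul_assoc, massoc hf, massoc he]
    simp only [mul_assoc] at hfe; exact hfe
  have := inv_uniq hinv h1 h2
  rw [this, inv_idem hinv hef]

lemma inv_mul (hinv : InvSgrp inv) (x y : S) : inv (x * y) = inv y * inv x := by
  have hc := idem_comm hinv (idem_ix hinv x) (idem_xi hinv y)
  symm; apply inv_uniq hinv
  · calc x * y * (inv y * inv x) * (x * y)
        = x * ((y * inv y) * (inv x * x)) * y := by simp only [mul_assoc]
      _ = x * ((inv x * x) * (y * inv y)) * y := by rw [← hc]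
      _ = (x * (inv x * x)) * ((y * inv y) * y) := by simp only [mul_assoc]
      _ = x * y := by rw [xix hinv, hinv.1]
  · calc inv y * inv x * (x * y) * (inv y * inv x)
        = inv y * ((inv x * x) * (y * inv y)) * inv x := by simp only [mul_assoc]
      _ = inv y * ((y * inv y) * (inv x * x)) * inv x := by rw [hc]
      _ = (inv y * (y * inv y)) * ((inv x * x) * inv x) := by simp only [mul_assoc]
      _ = inv y * inv x := by rw [ixi hinv, hinv.2.1]

lemma eg (hinv : InvSgrp inv) {e g : S} (hg : g * inv g = e) : e * g = g := by
  rw [← hg]; exact hinv.1 g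

lemma ge (hinv : InvSgrp inv) {e g : S} (hg : inv g * g = e) : g * e = g := by
  rw [← hg]; exact xix hinv g

lemma eg' (hinv : InvSgrp inv) {e g : S} (hg : inv g * g = e) : e * inv g = inv g := by
  rw [← hg]; exact hinv.2.1 g

lemma ge' (hinv : InvSgrp inv) {e g : S} (hg : g * inv g = e) : inv g * e = inv g := by
  rw [← hg]; exact ixi hinv g

lemma mul_mem (hinv : InvSgrp inv) {e g h : S} (hg1 : inv g * g = e)
    (hh1 : inv h * h = e) (hh2 : h * inv h = e) : inv (g * h) * (g * h) = e := by
  rw [inv_mul hinv]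
  calc inv h * inv g * (g * h) = inv h * ((inv g * g) * h) := by simp only [mul_assoc]
    _ = inv h * h := by rw [hg1, eg hinv hh2]
    _ = e := hh1

lemma mul_mem' (hinv : InvSgrp inv) {e g h : S} (hg1 : inv g * g = e)
    (hg2 : g * inv g = e) (hh2 : h * inv h = e) : (g * h) * inv (g * h) = e := by
  rw [inv_mul hinv]
  calc g * h * (inv h * inv g) = g * ((h * inv h) * inv g) := by simp only [mul_assoc]
    _ = g * inv g := by rw [hh2, eg' hinv hg1]
    _ = e := hg2

end Semigroup

section Zero
variable {S : Type u} [SemigroupWithZero S] {inv : S → S}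

lemma nz_ix (hinv : InvSgrp inv) {x : S} (hx : x ≠ 0) : inv x * x ≠ 0 := by
  intro h0
  exact hx (by rw [← xix hinv x, h0, mul_zero])

lemma nz_xi (hinv : InvSgrp inv) {x : S} (hx : x ≠ 0) : x * inv x ≠ 0 := by
  intro h0
  exact hx (by rw [← hinv.1 x, h0, zero_mul])

/-- The D-relation on nonzero idempotents. -/
def dSetoid (inv : S → S) (hinv : InvSgrp inv) : Setoid {e : S // e ≠ 0 ∧ e * e = e} where
  r e f := ∃ x : S, inv x * x = e.1 ∧ x * inv x = f.1
  iseqv := by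
    constructor
    · intro e
      exact ⟨e.1, by rw [inv_idem hinv e.2.2]; exact e.2.2,
        by rw [inv_idem hinv e.2.2]; exact e.2.2⟩
    · rintro e f ⟨x, h1, h2⟩
      exact ⟨inv x, by rw [inv_inv hinv]; exact h2, by rw [inv_inv hinv]; exact h1⟩
    · rintro e f g ⟨x, h1, h2⟩ ⟨y, h3, h4⟩
      refine ⟨y * x, ?_, ?_⟩
      · rw [inv_mul hinv]
        calc inv x * inv y * (y * x) = inv x * ((inv y * y) * x) := by simp only [mul_assoc]
          _ = inv x * ((x * inv x) * x) := by rw [h3, h2]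
          _ = (inv x * x) * (inv x * x) := by simp only [mul_assoc]
          _ = e.1 := by rw [h1, e.2.2]
      · calc y * x * inv (y * x) = y * x * (inv x * inv y) := by rw [inv_mul hinv]
          _ = y * ((x * inv x) * inv y) := by simp only [mul_assoc]
          _ = y * ((inv y * y) * inv y) := by rw [h2, h3]
          _ = (y * inv y) * (y * inv y) := by simp only [mul_assoc]
          _ = g.1 := by rw [h4, g.2.2]

/-- The maximal subgroup at an idempotent `e`. -/
def hGroup (inv : S → S) (hinv : InvSgrp inv) (e : S) (he : e * e = e) :
    Group {g : S // inv g * g = e ∧ g * inv g = e} :=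
  letI : Mul {g : S // inv g * g = e ∧ g * inv g = e} :=
    ⟨fun g h => ⟨g.1 * h.1, mul_mem hinv g.2.1 h.2.1 h.2.2, mul_mem' hinv g.2.1 g.2.2 h.2.2⟩⟩
  letI : One {g : S // inv g * g = e ∧ g * inv g = e} :=
    ⟨⟨e, by rw [inv_idem hinv he]; exact he, by rw [inv_idem hinv he]; exact he⟩⟩
  letI : Inv {g : S // inv g * g = e ∧ g * inv g = e} :=
    ⟨fun g => ⟨inv g.1, by rw [inv_inv hinv]; exact g.2.2, by rw [inv_inv hinv]; exact g.2.1⟩⟩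
  Group.ofLeftAxioms (fun a b c => Subtype.ext (mul_assoc a.1 b.1 c.1))
    (fun a => Subtype.ext (eg hinv a.2.2)) (fun a => Subtype.ext a.2.1)

end Zero

section Topology

lemma cc_closed_subtype {X : Type u} [TopologicalSpace X] (hcc : CountablyCompact X)
    {p : X → Prop} (hcl : IsClosed {x | p x}) : CountablyCompact {x : X // p x} := by
  intro U hU hUcov
  have hch : ∀ n, ∃ V : Set X, IsOpen V ∧ Subtype.val ⁻¹' V = U n := by
    intro n; exact isOpen_induced_iff.mp (hU n)
  choose V hVo hVe using hch
  obtain ⟨t, ht⟩ := hcc (fun n => V n ∪ {x | p x}ᶜ)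
    (fun n => (hVo n).union hcl.isOpen_compl)
    (by
      apply Set.eq_univ_of_forall
      intro x
      by_cases hx : p x
      · have : (⟨x, hx⟩ : {x : X // p x}) ∈ ⋃ n, U n := hUcov ▸ Set.mem_univ _
        obtain ⟨n, hn⟩ := Set.mem_iUnion.mp this
        exact Set.mem_iUnion.mpr ⟨n, Or.inl (by rw [← hVe n] at hn; exact hn)⟩
      · exact Set.mem_iUnion.mpr ⟨0, Or.inr hx⟩)
  refine ⟨t, Set.eq_univ_of_forall fun z => ?_⟩
  have : z.1 ∈ ⋃ n ∈ t, (V n ∪ {x | p x}ᶜ) := ht ▸ Set.mem_univ _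
  obtain ⟨n, hnt, hn⟩ := Set.mem_iUnion₂.mp this
  rcases hn with hn | hn
  · exact Set.mem_iUnion₂.mpr ⟨n, hnt, by rw [← hVe n]; exact hn⟩
  · exact absurd z.2 hn

lemma acc_point {X : Type u} [TopologicalSpace X] [T2Space X] (hcc : CountablyCompact X)
    (s : ℕ → X) (hinj : Function.Injective s) :
    ∃ y : X, ∀ U : Set X, IsOpen U → y ∈ U → {n | s n ∈ U}.Infinite := by
  by_contra hcon
  push_neg at hcon
  have h : ∀ y : X, ∃ U : Set X, IsOpen U ∧ y ∈ U ∧ {n | s n ∈ U}.Finite := by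
    intro y
    obtain ⟨U, hUo, hyU, hfin⟩ := hcon y
    exact ⟨U, hUo, hyU, hfin⟩
  have hclosed : ∀ A : Set ℕ, IsClosed (s '' A) := by
    intro A
    apply isClosed_of_closure_subset
    intro y hy
    obtain ⟨U, hUo, hyU, hfin⟩ := h y
    have h1 : y ∈ closure (s '' (A ∩ {n | s n ∈ U})) := by
      rw [mem_closure_iff] at hy ⊢
      intro V hVo hyV
      obtain ⟨z, ⟨hzV, hzU⟩, m, hmA, hmz⟩ := hy (V ∩ U) (hVo.inter hUo) ⟨hyV, hyU⟩
      exact ⟨z, hzV, m, ⟨hmA, by rw [Set.mem_setOf_eq, hmz]; exact hzU⟩, hmz⟩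
    have h2 : (s '' (A ∩ {n | s n ∈ U})).Finite :=
      (hfin.image s).subset (Set.image_mono (f := s) Set.inter_subset_right)
    have := h2.isClosed.closure_subset h1
    exact Set.image_mono (f := s) Set.inter_subset_left this
  set V : ℕ → Set X := fun n =>
    Nat.rec (Set.range s)ᶜ (fun m _ => (s '' {k | k ≠ m})ᶜ) n with hV
  have hVo : ∀ n, IsOpen (V n) := by
    intro n
    cases n with
    | zero =>
      exact (by rw [← Set.image_univ]; exact hclosed _ : IsClosed (Set.range s)).isOpen_compl
    | succ m => exact (hclosed _).isOpen_compl
  obtain ⟨t, ht⟩ := hcc V hVo (by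
    apply Set.eq_univ_of_forall
    intro x
    by_cases hx : x ∈ Set.range s
    · obtain ⟨m, hm⟩ := hx
      refine Set.mem_iUnion.mpr ⟨m + 1, ?_⟩
      intro hmem
      obtain ⟨k, hk, hks⟩ := hmem
      exact hk (hinj (hks.trans hm.symm))
    · exact Set.mem_iUnion.mpr ⟨0, hx⟩)
  set N := t.sup id + 1 with hN
  have hsN : s N ∈ ⋃ n ∈ t, V n := ht ▸ Set.mem_univ _
  obtain ⟨n, hnt, hn⟩ := Set.mem_iUnion₂.mp hsN
  cases n with
  | zero => exact hn ⟨N, rfl⟩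
  | succ m =>
    apply hn
    refine ⟨N, ?_, rfl⟩
    intro hNm
    have : m + 1 ≤ t.sup id := Finset.le_sup (f := id) hnt
    omega

lemma no_bad_seq {X : Type u} [TopologicalSpace X] [T2Space X] (hcc : CountablyCompact X)
    (φ : X × X → X) (hφ : Continuous φ) (s : ℕ → X) (z e : X) (hne : e ≠ z)
    (hdiag : ∀ n, φ (s n, s n) = e) (hoff : ∀ n m, n ≠ m → φ (s n, s m) = z) : False := by
  have hinj : Function.Injective s := by
    intro n m hnm
    by_contra hne'
    have h1 := hoff n m hne'
    rw [hnm, hdiag] at h1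
    exact hne h1
  obtain ⟨y, hy⟩ := acc_point hcc s hinj
  have key : ∀ w : X, φ (y, y) ≠ w →
      ∃ U : Set X, IsOpen U ∧ y ∈ U ∧ ∀ a b, a ∈ U → b ∈ U → φ (a, b) ≠ w := by
    intro w hw
    have ho : IsOpen (φ ⁻¹' {w}ᶜ) := (isOpen_compl_iff.mpr isClosed_singleton).preimage hφ
    have hyy : (y, y) ∈ φ ⁻¹' {w}ᶜ := hw
    obtain ⟨U1, hU1, U2, hU2, hsub⟩ := mem_nhds_prod_iff.mp (ho.mem_nhds hyy)
    obtain ⟨O1, hO1s, hO1o, hyO1⟩ := mem_nhds_iff.mp hU1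
    obtain ⟨O2, hO2s, hO2o, hyO2⟩ := mem_nhds_iff.mp hU2
    refine ⟨O1 ∩ O2, hO1o.inter hO2o, ⟨hyO1, hyO2⟩, fun a b ha hb => ?_⟩
    exact hsub (Set.mk_mem_prod (hO1s ha.1) (hO2s hb.2))
  have hpz : φ (y, y) = z := by
    by_contra hw
    obtain ⟨U, hUo, hyU, hU⟩ := key z hw
    have hinf := hy U hUo hyU
    obtain ⟨n, hn⟩ := hinf.nonempty
    obtain ⟨m, hm⟩ := (hinf.diff (Set.finite_singleton n)).nonempty
    exact hU (s n) (s m) hn hm.1 (hoff n m fun hh => hm.2 (by rw [hh]; rfl))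
  have hpe : φ (y, y) = e := by
    by_contra hw
    obtain ⟨U, hUo, hyU, hU⟩ := key e hw
    obtain ⟨n, hn⟩ := (hy U hUo hyU).nonempty
    exact hU (s n) (s n) hn hn (hdiag n)
  exact hne (hpe ▸ hpz)

end Topology

end Stmt8

/-- Every primitive countably compact Hausdorff topological inverse
semigroup `S` is topologically isomorphic to an orthogonal sum of topological Brandt
`λ i`-extensions `B_{λ i}(G i)` of countably compact topological groups `G i`, with
all cardinals `λ i` finite: the non-zero parts of the summands partition `S \ {0}`
via injections `f i : L i × G i × L i → S` (`L i` finite), multiplication is the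
Brandt multiplication inside each summand and zero across distinct summands, and each
maximal subgroup `{f i (a, g, a) : g ∈ G i}` carries the topology of `G i`. -/
theorem stmt_8 {S : Type u} [SemigroupWithZero S] [TopologicalSpace S] [T2Space S]
    [ContinuousMul S] [Nontrivial S]
    (inv : S → S) (hinvc : Continuous inv) (hinv : InvSgrp inv)
    (hcc : CountablyCompact S)
    (hprim : ∀ e : S, e ≠ 0 → e * e = e →
      ∀ f : S, f ≠ 0 → f * f = f → e * f = f → f * e = f → f = e) :
    ∃ (ι : Type u) (L : ι → Type u) (G : ι → Type u)
      (gi : ∀ i, Group (G i)) (ti : ∀ i, TopologicalSpace (G i))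
      (f : ∀ i, L i × G i × L i → S),
      (∀ i, letI := gi i; letI := ti i;
        IsTopologicalGroup (G i) ∧ CountablyCompact (G i)) ∧
      (∀ i, Finite (L i)) ∧ (∀ i, Nonempty (L i)) ∧
      (∀ i p, f i p ≠ 0) ∧
      (∀ i, Function.Injective (f i)) ∧
      (∀ i j, i ≠ j → ∀ p q, f i p ≠ f j q) ∧
      (∀ x : S, x ≠ 0 → ∃ i p, f i p = x) ∧
      (∀ i, letI := gi i;
        ∀ (a : L i) (g : G i) (b c : L i) (h : G i) (d : L i),
          (b = c → f i (a, g, b) * f i (c, h, d) = f i (a, g * h, d)) ∧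
          (b ≠ c → f i (a, g, b) * f i (c, h, d) = 0)) ∧
      (∀ i j, i ≠ j → ∀ p q, f i p * f j q = 0) ∧
      (∀ i (a : L i), letI := gi i; letI := ti i;
        Topology.IsEmbedding fun g : G i => f i (a, g, a)) := by
  classical
  letI sd : Setoid {e : S // e ≠ 0 ∧ e * e = e} := Stmt8.dSetoid inv hinv
  -- distinct nonzero idempotents are orthogonal
  have horth : ∀ p q : S, p ≠ 0 → p * p = p → q ≠ 0 → q * q = q → p ≠ q → p * q = 0 := by
    intro p q hp hpi hq hqi hne
    by_contra h0
    have hpq := Stmt8.idem_mul hinv hpi hqi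
    have hcomm := Stmt8.idem_comm hinv hpi hqi
    have h1 : p * (p * q) = p * q := by rw [← mul_assoc, hpi]
    have h2 : (p * q) * p = p * q := by rw [mul_assoc, ← hcomm, ← mul_assoc, hpi]
    have e1 : p * q = p := hprim p hp hpi (p * q) h0 hpq h1 h2
    have h3 : q * (p * q) = p * q := by rw [hcomm, ← mul_assoc, hqi]
    have h4 : (p * q) * q = p * q := by rw [mul_assoc, hqi]
    have e2 : p * q = q := hprim q hq hqi (p * q) h0 hpq h3 h4
    exact hne (e1.symm.trans e2)
  let E : Quotient sd → S := fun i => (Quotient.out i).1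
  have hE : ∀ i, E i ≠ 0 ∧ E i * E i = E i := fun i => (Quotient.out i).2
  let L : Quotient sd → Type u :=
    fun i => {a : {e : S // e ≠ 0 ∧ e * e = e} // Quotient.mk sd a = i}
  have hx : ∀ (i : Quotient sd) (a : L i), ∃ v : S, inv v * v = E i ∧ v * inv v = a.1.1 := by
    intro i a
    have h1 : Quotient.mk sd (Quotient.out i) = Quotient.mk sd a.1 := by
      rw [Quotient.out_eq, a.2]
    exact Quotient.exact h1
  choose u hu1 hu2 using hx
  let G : Quotient sd → Type u := fun i => {g : S // inv g * g = E i ∧ g * inv g = E i}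
  let gi : ∀ i, Group (G i) := fun i => Stmt8.hGroup inv hinv (E i) (hE i).2
  let f : ∀ i, L i × G i × L i → S := fun i p => u i p.1 * p.2.1.1 * inv (u i p.2.2)
  have hLne : ∀ (i : Quotient sd) (a b : L i), a ≠ b → a.1.1 ≠ b.1.1 := by
    intro i a b hab h
    exact hab (Subtype.ext (Subtype.ext h))
  have hcross : ∀ (i j : Quotient sd) (a : L i) (b : L j), a.1.1 ≠ b.1.1 →
      inv (u i a) * u j b = 0 := by
    intro i j a b hne2
    have h0 : a.1.1 * b.1.1 = 0 := horth _ _ a.1.2.1 a.1.2.2 b.1.2.1 b.1.2.2 hne2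
    calc inv (u i a) * u j b
        = (inv (u i a) * a.1.1) * (b.1.1 * u j b) := by
          rw [Stmt8.ge' hinv (hu2 i a), Stmt8.eg hinv (hu2 j b)]
      _ = inv (u i a) * ((a.1.1 * b.1.1) * u j b) := by simp only [mul_assoc]
      _ = 0 := by rw [h0, zero_mul, mul_zero]
  have hijne : ∀ (i j : Quotient sd), i ≠ j → ∀ (a : L i) (b : L j), a.1.1 ≠ b.1.1 := by
    intro i j hij a b h
    exact hij (by rw [← a.2, ← b.2, Subtype.ext h])
  have hinvf : ∀ (i : Quotient sd) (a b : L i) (g : G i),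
      inv (u i a * g.1 * inv (u i b)) = u i b * inv g.1 * inv (u i a) := by
    intro i a b g
    rw [Stmt8.inv_mul hinv, Stmt8.inv_mul hinv, Stmt8.inv_inv hinv, ← mul_assoc]
  have hright : ∀ (i : Quotient sd) (a b : L i) (g : G i),
      (u i a * g.1 * inv (u i b)) * inv (u i a * g.1 * inv (u i b)) = a.1.1 := by
    intro i a b g
    rw [hinvf]
    calc (u i a * g.1 * inv (u i b)) * (u i b * inv g.1 * inv (u i a))
        = u i a * (g.1 * ((inv (u i b) * u i b) * (inv g.1 * inv (u i a)))) := by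
          simp only [mul_assoc]
      _ = u i a * (g.1 * (E i * (inv g.1 * inv (u i a)))) := by rw [hu1 i b]
      _ = u i a * (g.1 * (inv g.1 * inv (u i a))) := by
          rw [Stmt8.massoc (Stmt8.eg' hinv g.2.1)]
      _ = u i a * ((g.1 * inv g.1) * inv (u i a)) := by simp only [mul_assoc]
      _ = u i a * (E i * inv (u i a)) := by rw [g.2.2]
      _ = u i a * inv (u i a) := by rw [Stmt8.eg' hinv (hu1 i a)]
      _ = a.1.1 := hu2 i a
  have hleft : ∀ (i : Quotient sd) (a b : L i) (g : G i),
      inv (u i a * g.1 * inv (u i b)) * (u i a * g.1 * inv (u i b)) = b.1.1 := by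
    intro i a b g
    rw [hinvf]
    calc (u i b * inv g.1 * inv (u i a)) * (u i a * g.1 * inv (u i b))
        = u i b * (inv g.1 * ((inv (u i a) * u i a) * (g.1 * inv (u i b)))) := by
          simp only [mul_assoc]
      _ = u i b * (inv g.1 * (E i * (g.1 * inv (u i b)))) := by rw [hu1 i a]
      _ = u i b * (inv g.1 * (g.1 * inv (u i b))) := by
          rw [Stmt8.massoc (Stmt8.eg hinv g.2.2)]
      _ = u i b * ((inv g.1 * g.1) * inv (u i b)) := by simp only [mul_assoc]
      _ = u i b * (E i * inv (u i b)) := by rw [g.2.1]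
      _ = u i b * inv (u i b) := by rw [Stmt8.eg' hinv (hu1 i b)]
      _ = b.1.1 := hu2 i b
  have hrecov : ∀ (i : Quotient sd) (a b : L i) (g : G i),
      inv (u i a) * (u i a * g.1 * inv (u i b) * u i b) = g.1 := by
    intro i a b g
    calc inv (u i a) * (u i a * g.1 * inv (u i b) * u i b)
        = (inv (u i a) * u i a) * (g.1 * (inv (u i b) * u i b)) := by simp only [mul_assoc]
      _ = E i * (g.1 * E i) := by rw [hu1 i a, hu1 i b]
      _ = E i * g.1 := by rw [Stmt8.ge hinv g.2.1]
      _ = g.1 := Stmt8.eg hinv g.2.2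
  refine ⟨Quotient sd, L, G, gi, fun i => instTopologicalSpaceSubtype, f,
    ?_, ?_, ?_, ?_, ?_, ?_, ?_, ?_, ?_, ?_⟩
  · -- topological group and countable compactness
    intro i
    constructor
    · refine { continuous_mul := ?_, continuous_inv := ?_ }
      · exact Continuous.subtype_mk
          ((continuous_subtype_val.comp continuous_fst).mul
            (continuous_subtype_val.comp continuous_snd)) _
      · exact Continuous.subtype_mk (hinvc.comp continuous_subtype_val) _
    · apply Stmt8.cc_closed_subtype hcc
      have h1 : IsClosed {g : S | inv g * g = E i} :=
        isClosed_eq (hinvc.mul continuous_id) continuous_const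
      have h2 : IsClosed {g : S | g * inv g = E i} :=
        isClosed_eq (continuous_id.mul hinvc) continuous_const
      exact h1.inter h2
  · -- finiteness of L i
    intro i
    by_contra hfin
    rw [not_finite_iff_infinite] at hfin
    set emb := Infinite.natEmbedding (L i) with hemb
    exact Stmt8.no_bad_seq hcc (fun pq : S × S => inv pq.1 * pq.2)
      ((hinvc.comp continuous_fst).mul continuous_snd)
      (fun n => u i (emb n)) 0 (E i) (hE i).1
      (fun n => hu1 i (emb n))
      (fun n m hnm => hcross i i (emb n) (emb m)
        (hLne i _ _ (fun hh => hnm (emb.injective hh))))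
  · -- nonemptiness of L i
    exact fun i => ⟨⟨Quotient.out i, Quotient.out_eq i⟩⟩
  · -- nonzero
    rintro i ⟨a, g, b⟩ h0
    have h1 := hright i a b g
    rw [show (f i (a, g, b) : S) = u i a * g.1 * inv (u i b) from rfl] at h0
    rw [h0, zero_mul] at h1
    exact a.1.2.1 h1.symm
  · -- injectivity
    rintro i ⟨a, g, b⟩ ⟨c, h', d⟩ h
    have h2 : u i a * g.1 * inv (u i b) = u i c * h'.1 * inv (u i d) := h
    have hac : a.1.1 = c.1.1 := by
      rw [← hright i a b g, ← hright i c d h', h2]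
    have hbd : b.1.1 = d.1.1 := by
      rw [← hleft i a b g, ← hleft i c d h', h2]
    obtain rfl : a = c := Subtype.ext (Subtype.ext hac)
    obtain rfl : b = d := Subtype.ext (Subtype.ext hbd)
    have hgh : g.1 = h'.1 := by
      rw [← hrecov i a b g, h2, hrecov i a b h']
    rw [Subtype.ext hgh]
  · -- distinctness across summands
    rintro i j hij ⟨a, g, b⟩ ⟨c, h', d⟩ h
    have h2 : u i a * g.1 * inv (u i b) = u j c * h'.1 * inv (u j d) := h
    have hbd : b.1.1 = d.1.1 := by
      rw [← hleft i a b g, ← hleft j c d h', h2]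
    exact hijne i j hij b d hbd
  · -- surjectivity
    intro x hx
    have hαi : x * inv x ≠ 0 := Stmt8.nz_xi hinv hx
    have hαe : (x * inv x) * (x * inv x) = x * inv x := Stmt8.idem_xi hinv x
    have hβi : inv x * x ≠ 0 := Stmt8.nz_ix hinv hx
    have hβe : (inv x * x) * (inv x * x) = inv x * x := Stmt8.idem_ix hinv x
    set α : {e : S // e ≠ 0 ∧ e * e = e} := ⟨x * inv x, hαi, hαe⟩ with hα
    set β : {e : S // e ≠ 0 ∧ e * e = e} := ⟨inv x * x, hβi, hβe⟩ with hβ'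
    set i := Quotient.mk sd α with hi
    have hβq : Quotient.mk sd β = i := Quotient.sound ⟨x, rfl, rfl⟩
    set a : L i := ⟨α, rfl⟩ with ha
    set b : L i := ⟨β, hβq⟩ with hb
    have h2a : u i a * inv (u i a) = x * inv x := hu2 i a
    have h2b : u i b * inv (u i b) = inv x * x := hu2 i b
    have hA : ∀ y : S, x * (inv x * (x * y)) = x * y := fun y => by
      calc x * (inv x * (x * y)) = (x * (inv x * x)) * y := by simp only [mul_assoc]
        _ = x * y := by rw [Stmt8.xix hinv]
    have hB : ∀ y : S, inv x * (x * (inv x * y)) = inv x * y := fun y => by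
      calc inv x * (x * (inv x * y)) = (inv x * (x * inv x)) * y := by simp only [mul_assoc]
        _ = inv x * y := by rw [Stmt8.ixi hinv]
    set g0 : S := inv (u i a) * x * u i b with hg0
    have hg1 : inv g0 * g0 = E i := by
      rw [hg0, Stmt8.inv_mul hinv, Stmt8.inv_mul hinv, Stmt8.inv_inv hinv]
      calc inv (u i b) * (inv x * u i a) * (inv (u i a) * x * u i b)
          = inv (u i b) * (inv x * ((u i a * inv (u i a)) * (x * u i b))) := by
            simp only [mul_assoc]
        _ = inv (u i b) * (inv x * ((x * inv x) * (x * u i b))) := by rw [h2a]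
        _ = inv (u i b) * (inv x * (x * (inv x * (x * u i b)))) := by simp only [mul_assoc]
        _ = inv (u i b) * (inv x * (x * u i b)) := by rw [hB]
        _ = inv (u i b) * ((inv x * x) * u i b) := by simp only [mul_assoc]
        _ = inv (u i b) * u i b := by rw [Stmt8.eg hinv h2b]
        _ = E i := hu1 i b
    have hg2 : g0 * inv g0 = E i := by
      rw [hg0, Stmt8.inv_mul hinv, Stmt8.inv_mul hinv, Stmt8.inv_inv hinv]
      calc inv (u i a) * x * u i b * (inv (u i b) * (inv x * u i a))
          = inv (u i a) * (x * ((u i b * inv (u i b)) * (inv x * u i a))) := by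
            simp only [mul_assoc]
        _ = inv (u i a) * (x * ((inv x * x) * (inv x * u i a))) := by rw [h2b]
        _ = inv (u i a) * (x * (inv x * (x * (inv x * u i a)))) := by simp only [mul_assoc]
        _ = inv (u i a) * (x * (inv x * u i a)) := by rw [hA]
        _ = inv (u i a) * ((x * inv x) * u i a) := by simp only [mul_assoc]
        _ = inv (u i a) * u i a := by rw [Stmt8.eg hinv h2a]
        _ = E i := hu1 i a
    refine ⟨i, ⟨a, ⟨g0, hg1, hg2⟩, b⟩, ?_⟩
    show u i a * g0 * inv (u i b) = x
    rw [hg0]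
    calc u i a * (inv (u i a) * x * u i b) * inv (u i b)
        = (u i a * inv (u i a)) * (x * (u i b * inv (u i b))) := by simp only [mul_assoc]
      _ = (x * inv x) * (x * (inv x * x)) := by rw [h2a, h2b]
      _ = (x * inv x) * x := by rw [Stmt8.xix hinv]
      _ = x := hinv.1 x
  · -- multiplication law
    intro i a g b c h' d
    constructor
    · intro hbc
      subst hbc
      show (u i a * g.1 * inv (u i b)) * (u i b * h'.1 * inv (u i d))
        = u i a * (g.1 * h'.1) * inv (u i d)
      calc (u i a * g.1 * inv (u i b)) * (u i b * h'.1 * inv (u i d))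
          = u i a * (g.1 * ((inv (u i b) * u i b) * (h'.1 * inv (u i d)))) := by
            simp only [mul_assoc]
        _ = u i a * (g.1 * (E i * (h'.1 * inv (u i d)))) := by rw [hu1 i b]
        _ = u i a * (g.1 * (h'.1 * inv (u i d))) := by
            rw [Stmt8.massoc (Stmt8.eg hinv h'.2.2)]
        _ = u i a * (g.1 * h'.1) * inv (u i d) := by simp only [mul_assoc]
    · intro hbc
      have h0 : inv (u i b) * u i c = 0 := hcross i i b c (hLne i b c hbc)
      show (u i a * g.1 * inv (u i b)) * (u i c * h'.1 * inv (u i d)) = 0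
      calc (u i a * g.1 * inv (u i b)) * (u i c * h'.1 * inv (u i d))
          = u i a * (g.1 * ((inv (u i b) * u i c) * (h'.1 * inv (u i d)))) := by
            simp only [mul_assoc]
        _ = 0 := by rw [h0, zero_mul, mul_zero, mul_zero]
  · -- cross-summand products vanish
    rintro i j hij ⟨a, g, b⟩ ⟨c, h', d⟩
    have h0 : inv (u i b) * u j c = 0 := hcross i j b c (hijne i j hij b c)
    show (u i a * g.1 * inv (u i b)) * (u j c * h'.1 * inv (u j d)) = 0
    calc (u i a * g.1 * inv (u i b)) * (u j c * h'.1 * inv (u j d))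
        = u i a * (g.1 * ((inv (u i b) * u j c) * (h'.1 * inv (u j d)))) := by
          simp only [mul_assoc]
      _ = 0 := by rw [h0, zero_mul, mul_zero, mul_zero]
  · -- embedding of maximal subgroups
    intro i a
    have hψ : Continuous fun y : S => inv (u i a) * y * u i a :=
      (continuous_const.mul continuous_id).mul continuous_const
    have hφ : Continuous fun g : G i => f i (a, g, a) := by
      show Continuous fun g : G i => u i a * g.1 * inv (u i a)
      exact (continuous_const.mul continuous_subtype_val).mul continuous_const
    have hcomp : ((fun y : S => inv (u i a) * y * u i a) ∘ fun g : G i => f i (a, g, a))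
        = Subtype.val := by
      funext g
      show inv (u i a) * (u i a * g.1 * inv (u i a)) * u i a = g.1
      calc inv (u i a) * (u i a * g.1 * inv (u i a)) * u i a
          = (inv (u i a) * u i a) * (g.1 * (inv (u i a) * u i a)) := by simp only [mul_assoc]
        _ = E i * (g.1 * E i) := by rw [hu1 i a]
        _ = E i * g.1 := by rw [Stmt8.ge hinv g.2.1]
        _ = g.1 := Stmt8.eg hinv g.2.2
    have hinj2 : Function.Injective fun g : G i => f i (a, g, a) := by
      intro g h' hgh
      apply Subtype.ext
      have h1 := congrFun hcomp g
      have h2 := congrFun hcomp h'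
      rw [← h1, ← h2]
      exact congrArg (fun y => inv (u i a) * y * u i a) hgh
    exact ⟨Topology.IsInducing.of_comp hφ hψ
      (by rw [hcomp]; exact Topology.IsInducing.subtypeVal), hinj2⟩
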